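/- Let P be a poset and suppose its Dedekind–MacNeille completion D(P) is modular, i.e., for all closed subsets A, B, C ⊆ P (subsets with L(U(A)) = A, etc.) with A ⊆ C one has L(U(A ∪ B)) ∩ C = L(U(A ∪ (B ∩ C))). Then P is strictly modular: for all x, y, z ∈ P and all X, Z ⊆ P, (1) if x is a lower bound of Z then L(U(x,y) ∪ Z) = L(U({x} ∪ L({y} ∪ Z))), and (2) if every element of L(X) is ≤ z then L(U(L(X) ∪ {y}) ∪ {z}) = L(U(L(X) ∪ L(y,z))). -/
import Mathlib

private lemma clL {P : Type*} [PartialOrder P] (S : Set P) :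
    lowerBounds (upperBounds (lowerBounds S)) = lowerBounds S :=
  Set.Subset.antisymm
    (fun w hw s hs => hw (fun _ hl => hl hs))
    (fun w hw u hu => hu hw)

/-- If the Dedekind–MacNeille completion of a poset `P` is
modular (the modular law holds for closed subsets, where join is
`A ∨ B = L(U(A ∪ B))` and meet is intersection), then `P` is strictly
modular. -/
theorem stmt_16 {P : Type*} [PartialOrder P]
    (hmod : ∀ A B C : Set P, lowerBounds (upperBounds A) = A →
      lowerBounds (upperBounds B) = B → lowerBounds (upperBounds C) = C →
      A ⊆ C →
      lowerBounds (upperBounds (A ∪ B)) ∩ C = lowerBounds (upperBounds (A ∪ (B ∩ C)))) :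
    (∀ (x y : P) (Z : Set P), x ∈ lowerBounds Z →
      lowerBounds (upperBounds {x, y} ∪ Z) =
        lowerBounds (upperBounds ({x} ∪ lowerBounds ({y} ∪ Z)))) ∧
    (∀ (y z : P) (X : Set P), (∀ w ∈ lowerBounds X, w ≤ z) →
      lowerBounds (upperBounds (lowerBounds X ∪ {y}) ∪ {z}) =
        lowerBounds (upperBounds (lowerBounds X ∪ lowerBounds {y, z}))) := by
  have hIic : ∀ a : P, lowerBounds (upperBounds (Set.Iic a)) = Set.Iic a := by
    intro a; rw [upperBounds_Iic, lowerBounds_Ici]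
  constructor
  · intro x y Z hx
    have h := hmod (Set.Iic x) (Set.Iic y) (lowerBounds Z) (hIic x) (hIic y) (clL Z)
      (fun w hw s hs => le_trans hw (hx hs))
    have e1 : upperBounds ({x, y} : Set P) = upperBounds (Set.Iic x ∪ Set.Iic y) := by
      rw [upperBounds_union, upperBounds_Iic, upperBounds_Iic,
        upperBounds_insert, upperBounds_singleton]
    have e2 : upperBounds ({x} ∪ lowerBounds ({y} ∪ Z))
        = upperBounds (Set.Iic x ∪ (Set.Iic y ∩ lowerBounds Z)) := by
      rw [upperBounds_union, upperBounds_union, upperBounds_Iic,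
        upperBounds_singleton, lowerBounds_union, lowerBounds_singleton]
    rw [lowerBounds_union, e1, e2, ← h]
  · intro y z X hX
    have h := hmod (lowerBounds X) (Set.Iic y) (Set.Iic z) (clL X) (hIic y) (hIic z) hX
    have e1 : upperBounds (lowerBounds X ∪ {y})
        = upperBounds (lowerBounds X ∪ Set.Iic y) := by
      rw [upperBounds_union, upperBounds_union, upperBounds_Iic, upperBounds_singleton]
    have e2 : lowerBounds ({y, z} : Set P) = Set.Iic y ∩ Set.Iic z := by
      rw [lowerBounds_insert, lowerBounds_singleton]
    rw [lowerBounds_union, lowerBounds_singleton, e1, e2, ← h]
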